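/- arXiv:2407.10509 — 11 statements merged into one kernel-verified Lean document; each statement's English description precedes it below -/
import Mathlib

section
/- Let X = ℓ², P = {x ∈ ℓ² : n·x₁ ≥ |xₙ| for all n ≥ 2}, and K = (−P) ∩ B_X where B_X is the closed unit ball. Then 0 is a maximal element of K with respect to P, i.e. K ∩ P = {0}. -/
/-- In `X = ℓ²` (paper coordinate `n` is Lean index `n - 1`), with
`P = {x : n·x₁ ≥ |xₙ| for all n ≥ 2}` and `K = (−P) ∩ B_X`, the point `0` is a
`P`-maximal element of `K`, i.e. `K ∩ (0 + P) = K ∩ P = {0}`. -/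
theorem stmt3 :
    let X := lp (fun _ : ℕ => ℝ) 2
    let P : Set X := {x | ∀ i : ℕ, 1 ≤ i → |x i| ≤ ((i : ℝ) + 1) * x 0}
    let K : Set X := (-P) ∩ Metric.closedBall 0 1
    K ∩ P = {0} := by
  intro X P K
  ext x
  simp only [Set.mem_inter_iff, Set.mem_singleton_iff, Set.mem_setOf_eq, K, P,
    Set.mem_neg, Metric.mem_closedBall, dist_zero_right]
  constructor
  · rintro ⟨⟨hneg, _⟩, hpos⟩
    -- hneg : ∀ i, 1 ≤ i → |(-x) i| ≤ (i+1) * (-x) 0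
    have h0 : x 0 = 0 := by
      have h1 := hpos 1 le_rfl
      have h2 := hneg 1 le_rfl
      rw [show ((-x : X) : ℕ → ℝ) 1 = -(x 1) from rfl, show ((-x : X) : ℕ → ℝ) 0 = -(x 0) from rfl, abs_neg] at h2
      have := abs_nonneg (x 1)
      nlinarith
    have : ∀ i : ℕ, (x : ℕ → ℝ) i = 0 := by
      intro i
      rcases Nat.eq_zero_or_pos i with rfl | hi
      · exact h0
      · have h1 := hpos i hi
        rw [h0, mul_zero] at h1
        exact abs_nonpos_iff.mp h1
    ext i
    simpa using this i
  · rintro rfl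
    refine ⟨⟨?_, by simp⟩, ?_⟩ <;> intro i hi <;> simp
end

section
/- Let X = ℓ², P = {x ∈ ℓ² : n·x₁ ≥ |xₙ| for all n ≥ 2}, and K = (−P) ∩ B_X. Then the set of P-maximal elements of K equals {0}, i.e., every x ∈ K with x ≠ 0 satisfies (x + P) ∩ K ≠ {x}. -/
open scoped Pointwise

/-- In `X = ℓ²` (paper coordinate `n` is Lean index `n - 1`), with
`P = {x : n·x₁ ≥ |xₙ| for all n ≥ 2}` and `K = (−P) ∩ B_X`, the set of `P`-maximal
elements of `K` equals `{0}`: every `x ∈ K`, `x ≠ 0` satisfies `K ∩ (x + P) ≠ {x}`. -/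
theorem stmt4 :
    let X := lp (fun _ : ℕ => ℝ) 2
    let P : Set X := {x | ∀ i : ℕ, 1 ≤ i → |x i| ≤ ((i : ℝ) + 1) * x 0}
    let K : Set X := (-P) ∩ Metric.closedBall 0 1
    ({x ∈ K | K ∩ (({x} : Set X) + P) = {x}} = {0}) ∧
      ∀ x ∈ K, x ≠ 0 → K ∩ (({x} : Set X) + P) ≠ {x} := by
  intro X P K
  have hP_smul : ∀ (c : ℝ), 0 ≤ c → ∀ x : X, x ∈ P → c • x ∈ P := by
    intro c hc x hx i hi
    have h := hx i hi
    have h0 : (c • x) 0 = c * x 0 := rfl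
    have hi' : (c • x) i = c * x i := rfl
    rw [h0, hi', abs_mul, abs_of_nonneg hc]
    calc c * |x i| ≤ c * (((i:ℝ)+1) * x 0) := mul_le_mul_of_nonneg_left h hc
    _ = ((i:ℝ)+1) * (c * x 0) := by ring
  have hK0 : ∀ x : X, x ∈ K → x 0 = 0 → x = 0 := by
    intro x hx h0
    have hnP : -x ∈ P := hx.1
    ext i
    rcases Nat.eq_zero_or_pos i with rfl | hi
    · simpa using h0
    · have h := hnP i hi
      have hni : (-x) i = -(x i) := rfl
      have hn0 : (-x) 0 = -(x 0) := rfl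
      rw [hni, hn0, h0, abs_neg] at h
      have h2 : |x i| ≤ 0 := by simpa using h
      simpa using abs_nonpos_iff.mp h2
  have main : ∀ x ∈ K, x ≠ 0 → K ∩ (({x} : Set X) + P) ≠ {x} := by
    intro x hx hx0 heq
    have hyx : ((1:ℝ)/2) • x ≠ x := by
      intro h
      apply hx0
      have h3 : ((1:ℝ)/2 - 1) • x = 0 := by
        rw [sub_smul, one_smul, h, sub_self]
      rcases smul_eq_zero.mp h3 with h4 | h4
      · norm_num at h4
      · exact h4
    have hp : ((1:ℝ)/2) • (-x) ∈ P := hP_smul _ (by norm_num) _ hx.1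
    have hyK : ((1:ℝ)/2) • x ∈ K := by
      constructor
      · rw [Set.mem_neg, ← smul_neg]
        exact hp
      · have hx1 : ‖x‖ ≤ 1 := by
          have := hx.2
          rwa [Metric.mem_closedBall, dist_zero_right] at this
        rw [Metric.mem_closedBall, dist_zero_right, norm_smul]
        have habs : ‖(1:ℝ)/2‖ = 1/2 := by
          rw [Real.norm_eq_abs]; norm_num
        rw [habs]
        nlinarith [norm_nonneg x]
    have hyP : ((1:ℝ)/2) • x ∈ ({x} : Set X) + P := by
      have hsum : x + ((1:ℝ)/2) • (-x) = ((1:ℝ)/2) • x := by module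
      rw [← hsum]
      exact Set.add_mem_add rfl hp
    have : ((1:ℝ)/2) • x ∈ ({x} : Set X) := by
      rw [← heq]; exact Set.mem_inter hyK hyP
    exact hyx this
  refine ⟨?_, main⟩
  have h0P : (0 : X) ∈ P := by
    intro i hi
    have h0 : ((0 : X) : ∀ _ : ℕ, ℝ) i = 0 := rfl
    have h00 : ((0 : X) : ∀ _ : ℕ, ℝ) 0 = 0 := rfl
    rw [h0, h00]
    simp
  have h0K : (0 : X) ∈ K := by
    refine ⟨?_, by simp⟩
    rw [Set.mem_neg, neg_zero]
    exact h0P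
  have hsing : ({(0:X)} : Set X) + P = P := by
    simp [Set.singleton_add]
  ext x
  simp only [Set.mem_setOf_eq, Set.mem_singleton_iff]
  constructor
  · rintro ⟨hxK, hmax⟩
    by_contra hx0
    exact main x hxK hx0 hmax
  · rintro rfl
    refine ⟨h0K, ?_⟩
    rw [hsing]
    ext y
    simp only [Set.mem_inter_iff, Set.mem_singleton_iff]
    constructor
    · rintro ⟨hyK, hyP⟩
      have hnP : -y ∈ P := hyK.1
      apply hK0 y hyK
      have h1 := hyP 1 le_rfl
      have h2 := hnP 1 le_rfl
      have hn1 : (-y) 1 = -(y 1) := rfl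
      have hn0 : (-y) 0 = -(y 0) := rfl
      rw [hn1, hn0, abs_neg] at h2
      have a1 : (0:ℝ) ≤ |y 1| := abs_nonneg _
      nlinarith
    · rintro rfl
      exact ⟨h0K, h0P⟩
end

section
/- Let X = ℓ², P = {x ∈ ℓ² : n·x₁ ≥ |xₙ| for all n ≥ 2}, and K = (−P) ∩ B_X. Then the coordinate functional e₁*(x) = x₁ is strictly positive on P \ {0} and satisfies sup e₁*(K) = 0 = e₁*(0); hence 0 ∈ Pos(K, P). -/
/-- In `X = ℓ²` (paper coordinate `n` is Lean index `n - 1`), with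
`P = {x : n·x₁ ≥ |xₙ| for all n ≥ 2}` and `K = (−P) ∩ B_X`, the coordinate functional
`e₁*(x) = x₁` is strictly positive on `P \ {0}` and attains its supremum `0` over `K`
at `0 ∈ K`; hence `0 ∈ Pos(K, P)`. -/
theorem stmt5 :
    let X := lp (fun _ : ℕ => ℝ) 2
    let P : Set X := {x | ∀ i : ℕ, 1 ≤ i → |x i| ≤ ((i : ℝ) + 1) * x 0}
    let K : Set X := (-P) ∩ Metric.closedBall 0 1
    (∀ x ∈ P, x ≠ 0 → 0 < x 0) ∧
      (0 : X) ∈ K ∧ IsGreatest ((fun x : X => x 0) '' K) 0 := by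
  intro X P K
  have hPzero : (0 : X) ∈ P := by
    intro i hi
    simp [lp.coeFn_zero]
  refine ⟨?_, ⟨?_, ?_⟩, ?_, ?_⟩
  · intro x hx hne
    rcases lt_trichotomy (x 0) 0 with h | h | h
    · exfalso
      have h1 := hx 1 le_rfl
      have : ((1 : ℕ) : ℝ) + 1 = 2 := by norm_num
      nlinarith [abs_nonneg (x 1)]
    · exfalso
      apply hne
      ext i
      rcases Nat.eq_zero_or_pos i with rfl | hi
      · simpa using h
      · have h1 := hx i hi
        rw [h, mul_zero] at h1
        have := abs_nonneg (x i)
        have : |x i| = 0 := le_antisymm h1 this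
        simpa [lp.coeFn_zero] using abs_eq_zero.mp this
    · exact h
  · show -(0 : X) ∈ P
    simpa using hPzero
  · simp
  · exact ⟨0, ⟨by simpa using hPzero, by simp⟩, by simp [lp.coeFn_zero]⟩
  · rintro a ⟨x, ⟨hx, -⟩, rfl⟩
    have hx' : -x ∈ P := hx
    have h1 := hx' 1 le_rfl
    have hneg : (-x : X) 0 = -(x 0) := by simp
    have hneg1 : (-x : X) 1 = -(x 1) := by simp
    rw [hneg, hneg1] at h1
    nlinarith [abs_nonneg (-(x 1))]
end

section
/- Let X = ℓ², P = {x ∈ ℓ² : n·x₁ ≥ |xₙ| for all n ≥ 2}, and K = (−P) ∩ B_X. Then 0 is not a strictly maximal element of K: there exists ε > 0 (e.g. ε = 1/2) such that for every δ > 0 one has (P + δB_X) ∩ K ⊄ εB_X. -/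
open scoped Pointwise

set_option maxHeartbeats 1000000 in
/-- In `X = ℓ²` (paper coordinate `n` is Lean index `n - 1`), with
`P = {x : n·x₁ ≥ |xₙ| for all n ≥ 2}` and `K = (−P) ∩ B_X`, the point `0` is not a
strictly maximal element of `K`: there is `ε > 0` (e.g. `ε = 1/2`) such that for every
`δ > 0`, `(P + δB_X) ∩ (K − 0) ⊄ εB_X`. -/
theorem stmt6 :
    let X := lp (fun _ : ℕ => ℝ) 2
    let P : Set X := {x | ∀ i : ℕ, 1 ≤ i → |x i| ≤ ((i : ℝ) + 1) * x 0}
    let K : Set X := (-P) ∩ Metric.closedBall 0 1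
    ∃ ε > (0 : ℝ), ∀ δ > (0 : ℝ),
      ¬ (P + Metric.closedBall (0 : X) δ) ∩ K ⊆ Metric.closedBall (0 : X) ε := by
  intro X P K
  have hp2 : (0:ℝ) < (2:ENNReal).toReal := by norm_num
  have haddsingle : ∀ (i : ℕ) (x y : ℝ),
      (lp.single 2 i x : X) + lp.single 2 i y = lp.single 2 i (x + y) := by
    intro i x y
    apply lp.ext
    funext j
    rcases eq_or_ne j i with rfl | h
    · rw [lp.coeFn_add, Pi.add_apply, lp.single_apply_self, lp.single_apply_self,
        lp.single_apply_self]
    · rw [lp.coeFn_add, Pi.add_apply, lp.single_apply_ne _ _ _ h,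
        lp.single_apply_ne _ _ _ h, lp.single_apply_ne _ _ _ h, add_zero]
  have hnorm : ∀ (i : ℕ) (r : ℝ), ‖(lp.single 2 i r : X)‖ = |r| := by
    intro i r
    simpa using lp.norm_single hp2 (fun _ : ℕ => r) i
  refine ⟨1/3, by norm_num, ?_⟩
  intro δ hδ hsub
  set n : ℕ := ⌈1/δ⌉₊ with hn
  have hN : (0:ℝ) < (n:ℝ) + 1 := by positivity
  have hN2 : (0:ℝ) < (n:ℝ) + 2 := by positivity
  set a : ℝ := 1/(2*((n:ℝ)+1)) with ha
  set c : ℝ := 1/(2*((n:ℝ)+2)) with hc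
  have hapos : 0 < a := by positivity
  have hcpos : 0 < c := by positivity
  set p : X := lp.single 2 0 c + lp.single 2 (n+1) (1/2 : ℝ) with hpdef
  set w : X := lp.single 2 0 (-a - c) with hwdef
  set z : X := p + w with hzdef
  -- coordinates of p, w, z
  have hp0 : p 0 = c := by
    rw [hpdef, lp.coeFn_add, Pi.add_apply, lp.single_apply_self,
      lp.single_apply_ne _ _ _ (by omega : (0:ℕ) ≠ n+1), add_zero]
  have hpn : p (n+1) = 1/2 := by
    rw [hpdef, lp.coeFn_add, Pi.add_apply, lp.single_apply_self,
      lp.single_apply_ne _ _ _ (by omega : n+1 ≠ 0), zero_add]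
  have hpj : ∀ j : ℕ, j ≠ 0 → j ≠ n+1 → p j = 0 := by
    intro j h0 h1
    rw [hpdef, lp.coeFn_add, Pi.add_apply, lp.single_apply_ne _ _ _ h0,
      lp.single_apply_ne _ _ _ h1, add_zero]
  have hw0 : w 0 = -a - c := lp.single_apply_self _ _ _
  have hwj : ∀ j : ℕ, j ≠ 0 → w j = 0 := fun j h0 => lp.single_apply_ne _ _ _ h0
  have hz0 : z 0 = -a := by
    rw [hzdef, lp.coeFn_add, Pi.add_apply, hp0, hw0]; ring
  have hzn : z (n+1) = 1/2 := by
    rw [hzdef, lp.coeFn_add, Pi.add_apply, hpn, hwj _ (by omega)]; ring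
  have hzj : ∀ j : ℕ, j ≠ 0 → j ≠ n+1 → z j = 0 := by
    intro j h0 h1
    rw [hzdef, lp.coeFn_add, Pi.add_apply, hpj j h0 h1, hwj j h0]; ring
  -- p ∈ P
  have hpP : p ∈ P := by
    intro i hi
    rw [hp0]
    rcases eq_or_ne i (n+1) with rfl | hne
    · rw [hpn, abs_of_pos (by norm_num : (0:ℝ) < 1/2)]
      push_cast
      rw [hc]
      have h : ((n:ℝ) + 1 + 1) * (1/(2*((n:ℝ)+2))) = 1/2 := by
        field_simp; ring
      rw [h]
    · rw [hpj i (by omega) hne, abs_zero]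
      positivity
  -- w ∈ closedBall 0 δ
  have hna : (1:ℝ)/δ ≤ (n:ℝ) := Nat.le_ceil _
  have hδn : a + c ≤ δ := by
    have h1 : a + c ≤ 1/((n:ℝ)+1) := by
      rw [ha, hc]
      rw [div_add_div _ _ (by positivity) (by positivity),
        div_le_div_iff₀ (by positivity) hN]
      nlinarith
    have h2 : (1:ℝ)/((n:ℝ)+1) ≤ δ := by
      rw [div_le_iff₀ hN]
      have h3 : 1/δ ≤ (n:ℝ)+1 := by linarith
      rw [div_le_iff₀ hδ] at h3
      linarith
    linarith
  have hwball : w ∈ Metric.closedBall (0 : X) δ := by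
    rw [Metric.mem_closedBall, dist_zero_right, hwdef, hnorm,
      abs_of_neg (by linarith : -a - c < 0)]
    linarith
  -- z ∈ K
  have hzK : z ∈ K := by
    constructor
    · rw [Set.mem_neg]
      intro i hi
      rw [lp.coeFn_neg, Pi.neg_apply, Pi.neg_apply, hz0, neg_neg]
      rcases eq_or_ne i (n+1) with rfl | hne
      · rw [hzn]
        have habs : |(-(1/2) : ℝ)| = 1/2 := by norm_num
        rw [habs]
        push_cast
        rw [ha, mul_one_div, le_div_iff₀ (by positivity)]
        ring_nf
        nlinarith [Nat.cast_nonneg (α := ℝ) n]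
      · rw [hzj i (by omega) hne, neg_zero, abs_zero]
        positivity
    · rw [Metric.mem_closedBall, dist_zero_right]
      have hzsum : z = (lp.single 2 0 (-a) : X) + lp.single 2 (n+1) (1/2 : ℝ) := by
        rw [hzdef, hpdef, hwdef, add_right_comm, haddsingle]
        have hce : c + (-a - c) = -a := by ring
        rw [hce]
      have ha2 : a ≤ 1/2 := by
        rw [ha, div_le_div_iff₀ (by positivity) (by norm_num)]
        linarith [Nat.cast_nonneg (α := ℝ) n]
      rw [hzsum]
      refine (norm_add_le _ _).trans ?_
      rw [hnorm, hnorm, abs_of_neg (by linarith : -a < 0),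
        abs_of_pos (by norm_num : (0:ℝ) < 1/2)]
      linarith
  -- conclude
  have hzPB : z ∈ P + Metric.closedBall (0 : X) δ := ⟨p, hpP, w, hwball, rfl⟩
  have hball := hsub ⟨hzPB, hzK⟩
  rw [Metric.mem_closedBall, dist_zero_right] at hball
  have hlow : ‖z (n+1)‖ ≤ ‖z‖ := lp.norm_apply_le_norm (by norm_num) z (n+1)
  rw [hzn, Real.norm_eq_abs, abs_of_pos (by norm_num : (0:ℝ) < 1/2)] at hlow
  linarith
end

section
/- Let X = ℓ¹, P = ℓ¹₊, f = (1/n)_{n≥1}, and K = {x ∈ ℓ¹ : −1 ≤ f(x) ≤ 0} ∩ 2B_X. Then 0 is not strictly maximal for (K,P): the points xⁿ = eₙ − (1/n)e₁ satisfy xⁿ ∈ K, xⁿ ∈ P + (1/n)B_X (for n ≥ 2), and ‖xⁿ‖₁ ≥ 1. -/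
open scoped Pointwise

/-- In `X = ℓ¹` (paper coordinate `n` is Lean index `n - 1`), with `P = ℓ¹₊`,
`f(x) = Σₙ xₙ/n`, `K = {x : −1 ≤ f(x) ≤ 0} ∩ 2B_X`: the points `xⁿ = eₙ − (1/n)e₁`
satisfy `xⁿ ∈ K`, `xⁿ ∈ P + (1/n)B_X` and `‖xⁿ‖₁ ≥ 1` for `n ≥ 2`; consequently `0`
is not strictly maximal for `(K, P)`. -/
theorem stmt9 :
    let X := lp (fun _ : ℕ => ℝ) 1
    let P : Set X := {x | ∀ i : ℕ, 0 ≤ x i}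
    let f : X → ℝ := fun x => ∑' i : ℕ, x i / ((i : ℝ) + 1)
    let K : Set X := {x | -1 ≤ f x ∧ f x ≤ 0} ∩ Metric.closedBall 0 2
    let e : ℕ → X := fun i => lp.single 1 i (1 : ℝ)
    let xseq : ℕ → X := fun n => e (n - 1) - (1 / (n : ℝ)) • e 0
    (∀ n : ℕ, 2 ≤ n →
        xseq n ∈ K ∧ xseq n ∈ P + Metric.closedBall (0 : X) (1 / (n : ℝ)) ∧
          1 ≤ ‖xseq n‖) ∧
      ¬ (∀ ε > (0 : ℝ), ∃ δ > (0 : ℝ),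
          (P + Metric.closedBall (0 : X) δ) ∩ K ⊆ Metric.closedBall (0 : X) ε) := by
  intro X P f K e xseq
  have hcoord : ∀ n : ℕ, 2 ≤ n → ∀ i : ℕ,
      (xseq n : ∀ _ : ℕ, ℝ) i
        = (if i = n - 1 then (1:ℝ) else 0) - (1 / (n:ℝ)) * (if i = 0 then (1:ℝ) else 0) := by
    intro n hn i
    have : (xseq n : ∀ _ : ℕ, ℝ) i
        = (e (n-1) : ∀ _ : ℕ, ℝ) i - (1/(n:ℝ)) * (e 0 : ∀ _ : ℕ, ℝ) i := by
      show ((e (n-1) - (1/(n:ℝ)) • e 0 : X) : ∀ _ : ℕ, ℝ) i = _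
      rw [lp.coeFn_sub, Pi.sub_apply, lp.coeFn_smul, Pi.smul_apply, smul_eq_mul]
    rw [this]
    congr 1
    · by_cases h : i = n - 1
      · simp [e, h, lp.single_apply_self]
      · simp [e, h, lp.single_apply_ne _ _ _ h]
    · congr 1
      by_cases h : i = 0
      · simp [e, h, lp.single_apply_self]
      · simp [e, h, lp.single_apply_ne _ _ _ h]
  have hnormE : ∀ i : ℕ, ‖e i‖ = 1 := by
    intro i
    have := lp.norm_single (E := fun _ : ℕ => ℝ) (p := (1 : ENNReal)) (by norm_num) i (1:ℝ)
    exact this.trans norm_one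
  have hne : ∀ n : ℕ, 2 ≤ n → n - 1 ≠ 0 := by omega
  have hf0 : ∀ n : ℕ, 2 ≤ n → f (xseq n) = 0 := by
    intro n hn
    have hsum : f (xseq n)
        = ∑ i ∈ ({0, n-1} : Finset ℕ), (xseq n : ∀ _ : ℕ, ℝ) i / ((i:ℝ)+1) := by
      refine tsum_eq_sum ?_
      intro i hi
      simp only [Finset.mem_insert, Finset.mem_singleton, not_or] at hi
      rw [hcoord n hn i]
      simp [hi.1, hi.2]
    rw [hsum, Finset.sum_pair (by omega : (0:ℕ) ≠ n - 1)]
    rw [hcoord n hn 0, hcoord n hn (n-1)]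
    have hn1 : ((n:ℝ) - 1) + 1 = (n:ℝ) := by ring
    have hcast : ((n - 1 : ℕ) : ℝ) = (n:ℝ) - 1 := by
      have : (1:ℕ) ≤ n := by omega
      push_cast [this]; ring
    have hnpos : (0:ℝ) < (n:ℝ) := by positivity
    have h0 : (0:ℕ) ≠ n - 1 := by omega
    rw [if_neg h0, if_pos rfl, if_pos rfl, if_neg (hne n hn), hcast]
    have hn0 : (n:ℝ) ≠ 0 := ne_of_gt hnpos
    simp only [Nat.cast_zero, hn1]
    field_simp
    ring
  have hnormle : ∀ n : ℕ, 2 ≤ n → ‖xseq n‖ ≤ 1 + 1/(n:ℝ) := by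
    intro n hn
    have : ‖xseq n‖ ≤ ‖e (n-1)‖ + ‖(1/(n:ℝ)) • e 0‖ := norm_sub_le _ _
    have h2 : ‖(1/(n:ℝ)) • e 0‖ = (1/(n:ℝ)) * ‖e 0‖ := by
      rw [norm_smul, Real.norm_eq_abs, abs_of_nonneg (by positivity : (0:ℝ) ≤ 1/(n:ℝ))]
    rw [h2, hnormE, hnormE] at this
    linarith
  have hnormge : ∀ n : ℕ, 2 ≤ n → 1 ≤ ‖xseq n‖ := by
    intro n hn
    have h := lp.norm_apply_le_norm (p := (1 : ENNReal)) one_ne_zero (xseq n) (n-1)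
    rw [hcoord n hn (n-1)] at h
    simpa [if_pos rfl, if_neg (hne n hn)] using h
  have hmain : ∀ n : ℕ, 2 ≤ n →
      xseq n ∈ K ∧ xseq n ∈ P + Metric.closedBall (0 : X) (1 / (n : ℝ)) ∧
        1 ≤ ‖xseq n‖ := by
    intro n hn
    have hnpos : (0:ℝ) < (n:ℝ) := by positivity
    refine ⟨⟨⟨by rw [hf0 n hn]; norm_num, by rw [hf0 n hn]⟩, ?_⟩, ?_, hnormge n hn⟩
    · rw [Metric.mem_closedBall, dist_zero_right]
      have := hnormle n hn
      have : 1/(n:ℝ) ≤ 1 := by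
        rw [div_le_one hnpos]
        exact_mod_cast Nat.one_le_of_lt hn
      linarith [hnormle n hn]
    · refine ⟨e (n-1), ?_, -((1/(n:ℝ)) • e 0), ?_, by abel⟩
      · intro i
        by_cases h : i = n - 1
        · simp [e, h, lp.single_apply_self]
        · simp [e, lp.single_apply_ne _ _ _ h, Pi.single_apply, h]
      · rw [Metric.mem_closedBall, dist_zero_right, norm_neg, norm_smul]
        rw [hnormE]
        simp [abs_of_nonneg (by positivity : (0:ℝ) ≤ 1/(n:ℝ))]
  refine ⟨hmain, ?_⟩
  intro hcontra
  obtain ⟨δ, hδ, hsub⟩ := hcontra (1/2) (by norm_num)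
  obtain ⟨n, hn2, hnd⟩ : ∃ n : ℕ, 2 ≤ n ∧ 1/(n:ℝ) ≤ δ := by
    obtain ⟨m, hm⟩ := exists_nat_gt (max 2 (1/δ))
    have h2 : (2:ℝ) < m := lt_of_le_of_lt (le_max_left _ _) hm
    have h1 : 1/δ < m := lt_of_le_of_lt (le_max_right _ _) hm
    have hmpos : (0:ℝ) < m := by linarith
    refine ⟨m, by exact_mod_cast h2.le, ?_⟩
    rw [div_le_iff₀ hmpos]
    rw [div_lt_iff₀ hδ] at h1
    nlinarith
  obtain ⟨hK, hP, hnorm⟩ := hmain n hn2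
  have hmem : xseq n ∈ (P + Metric.closedBall (0 : X) δ) ∩ K := by
    refine ⟨?_, hK⟩
    exact Set.add_subset_add_left (Metric.closedBall_subset_closedBall hnd) hP
  have := hsub hmem
  rw [Metric.mem_closedBall, dist_zero_right] at this
  linarith
end

section
/- Let X = (c₀, |||·|||) where |||x||| = ‖x‖_∞ + ‖(xₙ/2ⁿ)ₙ‖₂, let K be the closed unit ball of |||·||| and P = (c₀)₊ the nonnegative cone. Then x̄ = (2/3)e₁ satisfies |||x̄||| = 1 and |||x̄ + p||| > 1 for every p ∈ P \ {0}; hence x̄ is a P-maximal element of K. -/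
open scoped ZeroAtInfty Pointwise

/-- The first standard unit vector `e₁ = (1,0,0,…)` as an element of `c₀`
(indexed by `ℕ` starting at `0`). -/
noncomputable def e₁c₀ : C₀(ℕ, ℝ) :=
  ⟨⟨fun n => if n = 0 then 1 else 0, continuous_of_discreteTopology⟩, by
    rw [cocompact_eq_atTop]
    refine Filter.Tendsto.congr' ?_ tendsto_const_nhds
    filter_upwards [Filter.eventually_ge_atTop 1] with n hn
    simp [Nat.one_le_iff_ne_zero.mp hn]⟩

lemma apply_le_norm (f : C₀(ℕ, ℝ)) (n : ℕ) : |f n| ≤ ‖f‖ := by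
  rw [← ZeroAtInftyContinuousMap.norm_toBCF_eq_norm]
  exact f.toBCF.norm_coe_le_norm n

lemma norm_le_of (f : C₀(ℕ, ℝ)) {C : ℝ} (hC : 0 ≤ C) (h : ∀ n, |f n| ≤ C) : ‖f‖ ≤ C := by
  rw [← ZeroAtInftyContinuousMap.norm_toBCF_eq_norm]
  exact (BoundedContinuousFunction.norm_le hC).2 h

lemma summable_sq (x : C₀(ℕ, ℝ)) : Summable (fun n => (x n / 2 ^ (n + 1)) ^ 2) := by
  have : Summable (fun n : ℕ => ‖x‖ ^ 2 * (1/4 : ℝ) ^ n) :=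
    (summable_geometric_of_lt_one (by norm_num) (by norm_num)).mul_left _
  refine this.of_nonneg_of_le (fun n => sq_nonneg _) (fun n => ?_)
  rw [div_pow]
  have h1 : (x n) ^ 2 ≤ ‖x‖ ^ 2 := by
    have := apply_le_norm x n
    nlinarith [abs_nonneg (x n), sq_abs (x n)]
  have h3 : ((2:ℝ)^(n+1))^2 = 4^n * 4 := by
    rw [← pow_mul, mul_comm, pow_mul]; norm_num [pow_succ]
  have h4 : (0:ℝ) < 4 ^ n := by positivity
  rw [h3, div_le_iff₀ (by positivity), one_div, inv_pow]
  rw [mul_assoc, inv_mul_eq_div, ← mul_div_assoc, le_div_iff₀ h4]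
  nlinarith [sq_nonneg ‖x‖]

/-- In `X = (c₀, |||·|||)` with `|||x||| = ‖x‖∞ + ‖(xₙ/2ⁿ)ₙ‖₂`, `K` the closed unit
ball of `|||·|||` and `P = (c₀)₊`, the point `x̄ = (2/3)e₁` satisfies `|||x̄||| = 1`
and `|||x̄ + p||| > 1` for all `p ∈ P \ {0}`; hence `x̄` is `P`-maximal in `K`. -/
theorem stmt11 :
    let N : C₀(ℕ, ℝ) → ℝ := fun x => ‖x‖ + Real.sqrt (∑' n : ℕ, (x n / 2 ^ (n + 1)) ^ 2)
    let K : Set C₀(ℕ, ℝ) := {x | N x ≤ 1}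
    let P : Set C₀(ℕ, ℝ) := {x | ∀ n : ℕ, 0 ≤ x n}
    let xbar : C₀(ℕ, ℝ) := (2 / 3 : ℝ) • e₁c₀
    N xbar = 1 ∧ (∀ p ∈ P, p ≠ 0 → 1 < N (xbar + p)) ∧
      K ∩ (({xbar} : Set C₀(ℕ, ℝ)) + P) = {xbar} := by

  intro N K P xbar
  have hxb : ∀ n : ℕ, xbar n = if n = 0 then (2/3 : ℝ) else 0 := by
    intro n
    show (2/3 : ℝ) * e₁c₀ n = _
    show (2/3 : ℝ) * (if n = 0 then (1:ℝ) else 0) = _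
    split <;> norm_num
  -- norm of xbar
  have hnx : ‖xbar‖ = 2/3 := by
    refine le_antisymm (norm_le_of _ (by norm_num) fun n => ?_) ?_
    · rw [hxb n]; split <;> rw [abs_le] <;> norm_num
    · have := apply_le_norm xbar 0
      rw [hxb 0] at this; simp at this; linarith [le_abs_self (2/3:ℝ)]
  -- tsum for xbar
  have hts : (∑' n : ℕ, (xbar n / 2 ^ (n + 1)) ^ 2) = 1/9 := by
    rw [tsum_eq_single 0 (fun n hn => by rw [hxb n, if_neg hn]; simp)]
    rw [hxb 0]; norm_num
  have hsqrt19 : Real.sqrt (1/9) = 1/3 := by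
    rw [show (1/9 : ℝ) = (1/3)^2 by norm_num, Real.sqrt_sq (by norm_num)]
  have hN1 : N xbar = 1 := by
    show ‖xbar‖ + _ = 1
    rw [hnx, hts, hsqrt19]; norm_num
  -- key strict inequality
  have key : ∀ p ∈ P, p ≠ 0 → 1 < N (xbar + p) := by
    intro p hp hp0
    obtain ⟨m, hm⟩ : ∃ m, p m ≠ 0 := by
      by_contra h
      push_neg at h
      exact hp0 (by ext n; simp [h n])
    have hpm : 0 < p m := (hp m).lt_of_ne (Ne.symm hm)
    have happ : ∀ n, (xbar + p) n = xbar n + p n := fun n => rfl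
    have hnormge : 2/3 + p 0 ≤ ‖xbar + p‖ := by
      have h1 := apply_le_norm (xbar + p) 0
      rw [happ 0, hxb 0] at h1
      simp only [if_pos rfl] at h1
      calc 2/3 + p 0 ≤ |2/3 + p 0| := le_abs_self _
        _ ≤ ‖xbar + p‖ := h1
    have hsum := summable_sq (xbar + p)
    set S := ∑' n : ℕ, ((xbar + p) n / 2 ^ (n + 1)) ^ 2 with hS
    have ht0 : ((xbar + p) 0 / 2 ^ (0 + 1)) ^ 2 = ((2/3 + p 0)/2)^2 := by
      rw [happ 0, hxb 0]; norm_num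
    by_cases hm0 : m = 0
    · -- p 0 > 0
      subst hm0
      have hSt0 : ((2/3 + p 0)/2)^2 ≤ S := by
        rw [← ht0]
        exact Summable.le_tsum hsum 0 (fun n _ => sq_nonneg _)
      have : (2/3 + p 0)/2 ≤ Real.sqrt S := by
        rw [show (2/3 + p 0)/2 = Real.sqrt (((2/3 + p 0)/2)^2) from
          (Real.sqrt_sq (by positivity)).symm]
        exact Real.sqrt_le_sqrt hSt0
      show 1 < ‖xbar + p‖ + Real.sqrt S
      nlinarith
    · -- p m > 0, m ≠ 0
      have hsub : (∑ n ∈ ({0, m} : Finset ℕ), ((xbar + p) n / 2 ^ (n + 1)) ^ 2) ≤ S :=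
        Summable.sum_le_tsum _ (fun n _ => sq_nonneg _) hsum
      rw [Finset.sum_pair (fun h => hm0 h.symm)] at hsub
      have htm : 0 < ((xbar + p) m / 2 ^ (m + 1)) ^ 2 := by
        have : (xbar + p) m = p m := by rw [happ m, hxb m, if_neg hm0, zero_add]
        rw [this]
        exact pow_pos (div_pos hpm (by positivity)) 2
      have ht0ge : (1/9 : ℝ) ≤ ((xbar + p) 0 / 2 ^ (0 + 1)) ^ 2 := by
        rw [ht0]
        nlinarith [hp 0]
      have hSgt : (1/9 : ℝ) < S := by linarith
      have : (1/3 : ℝ) < Real.sqrt S := by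
        rw [← hsqrt19]
        exact Real.sqrt_lt_sqrt (by norm_num) hSgt
      show 1 < ‖xbar + p‖ + Real.sqrt S
      nlinarith [hp 0]
  refine ⟨hN1, key, ?_⟩
  ext y
  constructor
  · rintro ⟨hyK, hyP⟩
    obtain ⟨a, ha, b, hb, rfl⟩ := hyP
    rw [Set.mem_singleton_iff] at ha
    subst ha
    by_cases hb0 : b = 0
    · simp [hb0]
    · exact absurd hyK (not_le.2 (key b hb hb0))
  · rintro rfl
    exact ⟨le_of_eq hN1, xbar, rfl, 0, fun n => le_refl 0, add_zero _⟩
end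

section
/- Let X = ℓ², P = ℓ²₊, and K = {x ∈ ℓ² : x₁ + xₙ² ≤ 0 for all n ≥ 2}. Then K is convex, closed, and K ∩ {x : x₁ ≥ 0} = {0}; in particular 0 is a P-maximal element of K. -/
/-- In `X = ℓ²` (paper coordinate `n` is Lean index `n - 1`) with `P = ℓ²₊` and
`K = {x : x₁ + xₙ² ≤ 0 for all n ≥ 2}`, the set `K` is convex and closed, and
`K ∩ {x : x₁ ≥ 0} = {0}`; in particular `0` is `P`-maximal: `K ∩ P = {0}`. -/
theorem stmt13 :
    let X := lp (fun _ : ℕ => ℝ) 2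
    let P : Set X := {x | ∀ i : ℕ, 0 ≤ x i}
    let K : Set X := {x | ∀ i : ℕ, 1 ≤ i → x 0 + (x i) ^ 2 ≤ 0}
    Convex ℝ K ∧ IsClosed K ∧ (K ∩ {x | 0 ≤ x 0} = {0}) ∧ K ∩ P = {0} := by
  intro X P K
  have heval : ∀ i : ℕ, Continuous fun x : X => x i := by
    intro i
    refine (LipschitzWith.mk_one fun x y => ?_).continuous
    have := lp.norm_apply_le_norm (p := 2) two_ne_zero (x - y) i
    simpa [dist_eq_norm] using this
  have hKconv : Convex ℝ K := by
    intro x hx y hy a b ha hb hab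
    intro i hi
    have hx' := hx i hi
    have hy' := hy i hi
    have h0 : (a • x + b • y) 0 = a * x 0 + b * y 0 := by
      rfl
    have hii : (a • x + b • y) i = a * x i + b * y i := by
      rfl
    rw [h0, hii]
    nlinarith [sq_nonneg (x i - y i), mul_nonneg ha hb,
      mul_nonneg ha (neg_nonneg.mpr hx'), mul_nonneg hb (neg_nonneg.mpr hy')]
  have hKcl : IsClosed K := by
    have : K = ⋂ i ∈ {i : ℕ | 1 ≤ i}, {x : X | x 0 + (x i) ^ 2 ≤ 0} := by
      ext x; simp [K, Set.mem_iInter]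
    rw [this]
    refine isClosed_biInter fun i _ => ?_
    exact isClosed_le (by continuity) continuous_const
  have hzeroK : (0 : X) ∈ K := by
    intro i hi
    simp [lp.coeFn_zero]
  have hmain : K ∩ {x : X | 0 ≤ x 0} = {0} := by
    ext x
    constructor
    · rintro ⟨hxK, hx0⟩
      have hx0' : (0:ℝ) ≤ x 0 := hx0
      have h0 : x 0 = 0 := by
        have := hxK 1 le_rfl
        nlinarith [sq_nonneg (x 1)]
      apply lp.ext
      funext i
      rcases Nat.eq_zero_or_pos i with hi | hi
      · simpa [hi] using h0
      · have := hxK i hi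
        have : (x i) ^ 2 ≤ 0 := by linarith [h0 ▸ this]
        have : x i = 0 := by nlinarith [sq_nonneg (x i)]
        simpa using this
    · rintro rfl
      exact ⟨hzeroK, by simp⟩
  refine ⟨hKconv, hKcl, hmain, ?_⟩
  apply Set.Subset.antisymm
  · intro x ⟨hxK, hxP⟩
    rw [← hmain]
    exact ⟨hxK, hxP 0⟩
  · intro x hx
    rw [Set.mem_singleton_iff] at hx
    subst hx
    exact ⟨hzeroK, fun i => by simp⟩
end

section
/- Let X = ℓ², P = ℓ²₊, and K = {x ∈ ℓ² : x₁ + xₙ² ≤ 0 for all n ≥ 2}. Then 0 ∉ Pos(K, P): for every y = (yₙ) ∈ ℓ² with yₙ > 0 for all n, there exists x ∈ K with ⟨y, x⟩ > 0. (Take x = (−α, √α, 0, …) with α > 0 small.) -/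
/-- In `X = ℓ²` (paper coordinate `n` is Lean index `n - 1`) with `P = ℓ²₊` and
`K = {x : x₁ + xₙ² ≤ 0 for all n ≥ 2}`, the point `0` is not in `Pos(K, P)`: every
strictly positive functional `y` (a sequence with all coordinates positive) satisfies
`⟨y, x⟩ > 0` for some `x ∈ K`. -/
theorem stmt14 :
    let X := lp (fun _ : ℕ => ℝ) 2
    let K : Set X := {x | ∀ i : ℕ, 1 ≤ i → x 0 + (x i) ^ 2 ≤ 0}
    ∀ y : X, (∀ i : ℕ, 0 < y i) → ∃ x ∈ K, 0 < ∑' i : ℕ, y i * x i := by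
  intro X K y hy
  set a : ℝ := y 1 / (2 * y 0) with ha
  have hy0 := hy 0
  have hy1 := hy 1
  have hapos : 0 < a := div_pos hy1 (by positivity)
  set x : X := lp.single 2 0 (-(a ^ 2)) + lp.single 2 1 a with hx
  have happ : ∀ (i : ℕ) (b : ℝ) (j : ℕ),
      (lp.single (E := fun _ : ℕ => ℝ) 2 i b : ∀ k : ℕ, ℝ) j = if j = i then b else 0 := by
    intro i b j
    rw [lp.single_apply]
    split_ifs with h
    · subst h; simp
    · simp [Pi.single_apply, h]
  have hx0 : (x : ∀ i : ℕ, ℝ) 0 = -(a ^ 2) := by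
    simp [hx, happ]
  have hx1 : (x : ∀ i : ℕ, ℝ) 1 = a := by
    simp [hx, happ]
  have hxi : ∀ i : ℕ, 2 ≤ i → (x : ∀ i : ℕ, ℝ) i = 0 := by
    intro i hi
    have h0 : i ≠ 0 := by omega
    have h1 : i ≠ 1 := by omega
    simp [hx, happ, h0, h1]
  refine ⟨x, ?_, ?_⟩
  · intro i hi
    rcases eq_or_lt_of_le hi with h | h
    · rw [hx0, ← h, hx1]; ring_nf; exact le_of_eq rfl
    · rw [hx0, hxi i h]
      nlinarith
  · have hsum : ∑' i : ℕ, y i * x i = ∑ i ∈ Finset.range 2, y i * x i := by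
      refine tsum_eq_sum ?_
      intro i hi
      have : 2 ≤ i := by simp [Finset.mem_range] at hi; omega
      rw [hxi i this, mul_zero]
    rw [hsum]
    rw [Finset.sum_range_succ, Finset.sum_range_one, hx0, hx1, ha]
    have h0 : y 0 ≠ 0 := ne_of_gt hy0
    field_simp
    nlinarith [mul_pos (mul_pos hy0 hy0) (mul_pos hy1 hy1)]
end

section
/- Let X = ℓ², P = ℓ²₊, and K = {x ∈ ℓ² : x₁ + xₙ² ≤ 0 for all n ≥ 2}. Define zⁿ ∈ ℓ² by zⁿ₁ = −1/(√2 n), zⁿₖ = 1/(√2 √n) for 2 ≤ k ≤ n+1, and 0 otherwise. Then zⁿ ∈ K, dist(zⁿ, P) → 0 as n → ∞, and ‖zⁿ‖² ≥ 1/2 for all n; consequently 0 is not strictly maximal for (K,P). -/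
open scoped Pointwise

private lemma single_apply' (i j : ℕ) (a : ℝ) :
    (lp.single 2 i a : lp (fun _ : ℕ => ℝ) 2) j = if j = i then a else 0 := by
  rcases eq_or_ne j i with h | h
  · subst h; simp [lp.single_apply_self]
  · simp [lp.single_apply_ne 2 i _ h, h]

/-- In `X = ℓ²` (paper coordinate `n` is Lean index `n - 1`) with `P = ℓ²₊` and
`K = {x : x₁ + xₙ² ≤ 0 for all n ≥ 2}`: the points `zⁿ` with first coordinate
`−1/(√2 n)`, coordinates `2,…,n+1` equal to `1/(√2 √n)` and `0` otherwise, lie in `K`,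
satisfy `dist(zⁿ, P) → 0` and `‖zⁿ‖² ≥ 1/2`; consequently `0` is not strictly maximal
for `(K, P)`. -/
theorem stmt15 :
    let X := lp (fun _ : ℕ => ℝ) 2
    let P : Set X := {x | ∀ i : ℕ, 0 ≤ x i}
    let K : Set X := {x | ∀ i : ℕ, 1 ≤ i → x 0 + (x i) ^ 2 ≤ 0}
    let z : ℕ → X := fun n =>
      lp.single 2 0 (-(1 / (Real.sqrt 2 * n))) +
        ∑ k ∈ Finset.Icc 1 n, lp.single 2 k (1 / (Real.sqrt 2 * Real.sqrt n))
    (∀ n : ℕ, 1 ≤ n → z n ∈ K ∧ (1 / 2 : ℝ) ≤ ‖z n‖ ^ 2) ∧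
      Filter.Tendsto (fun n => Metric.infDist (z n) P) Filter.atTop (nhds 0) ∧
      ¬ (∀ ε > (0 : ℝ), ∃ δ > (0 : ℝ),
          (P + Metric.closedBall (0 : X) δ) ∩ K ⊆ Metric.closedBall (0 : X) ε) := by
  intro X P K z
  have s2 : (0:ℝ) < Real.sqrt 2 := Real.sqrt_pos.2 (by norm_num)
  have s2sq : Real.sqrt 2 ^ 2 = 2 := Real.sq_sqrt (by norm_num)
  have s2le : Real.sqrt 2 ≤ 2 := by nlinarith [s2]
  -- coordinates of z n
  have hcoord : ∀ n j : ℕ, (z n : ∀ _ : ℕ, ℝ) j =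
      if j = 0 then -(1 / (Real.sqrt 2 * n)) else
        if j ∈ Finset.Icc 1 n then 1 / (Real.sqrt 2 * Real.sqrt n) else 0 := by
    intro n j
    have : (z n : ∀ _ : ℕ, ℝ) j
        = (lp.single 2 0 (-(1 / (Real.sqrt 2 * n))) : X) j
          + ∑ k ∈ Finset.Icc 1 n,
              (lp.single 2 k (1 / (Real.sqrt 2 * Real.sqrt n)) : X) j := by
      simp only [z]; rw [lp.coeFn_add, Pi.add_apply, lp.coeFn_sum, Finset.sum_apply]
    rw [this]
    simp only [single_apply', Finset.sum_ite_eq, Finset.mem_Icc]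
    rcases eq_or_ne j 0 with h | h
    · subst h; simp
    · simp [h, Finset.mem_Icc]
  have hbsq : ∀ n : ℕ, 1 ≤ n →
      (1 / (Real.sqrt 2 * Real.sqrt n)) ^ 2 = 1 / (2 * n) := by
    intro n hn
    have hn' : (0:ℝ) ≤ n := by positivity
    rw [div_pow, mul_pow, s2sq, Real.sq_sqrt hn', one_pow]
  -- norm lower bound
  have hnorm : ∀ n : ℕ, 1 ≤ n → (1 / 2 : ℝ) ≤ ‖z n‖ ^ 2 := by
    intro n hn
    have hp : (0:ℝ) < (2 : ENNReal).toReal := by norm_num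
    have := lp.sum_rpow_le_norm_rpow hp (z n) (Finset.Icc 1 n)
    have htr : (2 : ENNReal).toReal = (2:ℕ) := by norm_num
    rw [htr] at this
    simp only [Real.rpow_natCast] at this
    refine le_trans ?_ this
    have : ∀ k ∈ Finset.Icc 1 n, ‖(z n : ∀ _ : ℕ, ℝ) k‖ ^ (2:ℕ) = 1 / (2 * n) := by
      intro k hk
      have hk1 : k ≠ 0 := by
        simp only [Finset.mem_Icc] at hk; omega
      rw [hcoord, if_neg hk1, if_pos hk]
      rw [Real.norm_eq_abs, sq_abs, hbsq n hn]
    rw [Finset.sum_congr rfl this, Finset.sum_const, Nat.card_Icc]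
    have hn0 : (0:ℝ) < n := by positivity
    rw [nsmul_eq_mul]
    have : ((n + 1 - 1 : ℕ) : ℝ) = (n : ℝ) := by push_cast; ring
    rw [this]
    rw [mul_one_div, div_le_div_iff₀ (by norm_num) (by positivity)]
    ring_nf
    nlinarith [hn0]
  -- z n ∈ K
  have hK : ∀ n : ℕ, 1 ≤ n → z n ∈ K := by
    intro n hn i hi
    have hn0 : (0:ℝ) < n := by positivity
    have h0 : (z n : ∀ _ : ℕ, ℝ) 0 = -(1 / (Real.sqrt 2 * n)) := by
      rw [hcoord]; simp
    have hi0 : i ≠ 0 := by omega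
    show (z n : ∀ _ : ℕ, ℝ) 0 + ((z n : ∀ _ : ℕ, ℝ) i) ^ 2 ≤ 0
    rw [h0, hcoord, if_neg hi0]
    by_cases hmem : i ∈ Finset.Icc 1 n
    · rw [if_pos hmem, hbsq n hn]
      rw [neg_add_le_iff_le_add, add_zero, div_le_div_iff₀ (by positivity) (by positivity)]
      nlinarith [s2, hn0, s2le]
    · rw [if_neg hmem]
      simp only [ne_eq, OfNat.ofNat_ne_zero, not_false_eq_true, zero_pow, add_zero,
        neg_nonpos]
      positivity
  -- the projection p n ∈ P and distance bound
  have hdist : ∀ n : ℕ, 1 ≤ n → Metric.infDist (z n) P ≤ 1 / (Real.sqrt 2 * n) := by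
    intro n hn
    set pn : X := ∑ k ∈ Finset.Icc 1 n, lp.single 2 k (1 / (Real.sqrt 2 * Real.sqrt n))
      with hpn
    have hpnP : pn ∈ P := by
      intro i
      have : (pn : ∀ _ : ℕ, ℝ) i = ∑ k ∈ Finset.Icc 1 n,
          (lp.single 2 k (1 / (Real.sqrt 2 * Real.sqrt n)) : X) i := by
        rw [hpn, lp.coeFn_sum, Finset.sum_apply]
      rw [this]
      apply Finset.sum_nonneg
      intro k _
      rw [single_apply']
      split <;> positivity
    refine le_trans (Metric.infDist_le_dist_of_mem hpnP) ?_
    have : z n - pn = lp.single 2 0 (-(1 / (Real.sqrt 2 * n))) := by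
      simp [z, hpn]
    rw [dist_eq_norm, this]
    have hns : ‖(lp.single 2 0 (-(1 / (Real.sqrt 2 * n))) : X)‖
        = ‖(-(1 / (Real.sqrt 2 * (n:ℝ))) : ℝ)‖ := by
      have hp : (0:ℝ) < (2 : ENNReal).toReal := by norm_num
      simpa using lp.norm_single hp (fun _ : ℕ => (-(1 / (Real.sqrt 2 * (n:ℝ))) : ℝ)) 0
    rw [hns, norm_neg, Real.norm_eq_abs, abs_of_nonneg (by positivity)]
  -- tendsto
  have htend : Filter.Tendsto (fun n => Metric.infDist (z n) P) Filter.atTop (nhds 0) := by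
    have hg : Filter.Tendsto (fun n : ℕ => 1 / (Real.sqrt 2 * (n:ℝ))) Filter.atTop (nhds 0) := by
      have := Filter.Tendsto.const_mul (1 / Real.sqrt 2)
        tendsto_one_div_atTop_nhds_zero_nat
      rw [mul_zero] at this
      refine this.congr fun n => ?_
      field_simp
    refine squeeze_zero' ?_ ?_ hg
    · filter_upwards with n using Metric.infDist_nonneg
    · filter_upwards [Filter.eventually_ge_atTop 1] with n hn using hdist n hn
  refine ⟨fun n hn => ⟨hK n hn, hnorm n hn⟩, htend, ?_⟩
  -- not strictly maximal
  intro h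
  obtain ⟨δ, hδ, hsub⟩ := h (1/2) (by norm_num)
  obtain ⟨n, hn1, hnδ⟩ : ∃ n : ℕ, 1 ≤ n ∧ 1 / (Real.sqrt 2 * (n:ℝ)) ≤ δ := by
    obtain ⟨n, hn⟩ := exists_nat_ge (1/δ)
    refine ⟨max 1 n, le_max_left _ _, ?_⟩
    have h1 : (1:ℝ) ≤ (max 1 n : ℕ) := by exact_mod_cast Nat.le_max_left 1 n
    have h2 : (1/δ) ≤ ((max 1 n : ℕ) : ℝ) := by
      refine hn.trans ?_
      exact_mod_cast Nat.le_max_right 1 n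
    have hpos : (0:ℝ) < (max 1 n : ℕ) := by linarith
    calc 1 / (Real.sqrt 2 * ((max 1 n : ℕ):ℝ)) ≤ 1 / (1 * ((max 1 n : ℕ):ℝ)) := by
          apply one_div_le_one_div_of_le (by linarith)
          apply mul_le_mul_of_nonneg_right _ (by linarith)
          nlinarith [s2]
      _ = 1 / ((max 1 n : ℕ):ℝ) := by rw [one_mul]
      _ ≤ δ := by
          rw [div_le_iff₀ hpos]
          rw [div_le_iff₀ hδ] at h2
          nlinarith
  have hzmem : z n ∈ (P + Metric.closedBall (0 : X) δ) ∩ K := by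
    refine ⟨?_, hK n hn1⟩
    have hzeq : z n = (∑ k ∈ Finset.Icc 1 n, lp.single 2 k (1 / (Real.sqrt 2 * Real.sqrt n)))
        + lp.single 2 0 (-(1 / (Real.sqrt 2 * n))) := by
      simp only [z]; exact add_comm _ _
    rw [hzeq]
    refine Set.add_mem_add ?_ ?_
    · intro i
      have : ((∑ k ∈ Finset.Icc 1 n, lp.single 2 k (1 / (Real.sqrt 2 * Real.sqrt n)) : X)
          : ∀ _ : ℕ, ℝ) i = ∑ k ∈ Finset.Icc 1 n,
          (lp.single 2 k (1 / (Real.sqrt 2 * Real.sqrt n)) : X) i := by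
        rw [lp.coeFn_sum, Finset.sum_apply]
      rw [this]
      apply Finset.sum_nonneg
      intro k _
      rw [single_apply']
      split <;> positivity
    · rw [Metric.mem_closedBall, dist_zero_right]
      have hp : (0:ℝ) < (2 : ENNReal).toReal := by norm_num
      have hns : ‖(lp.single 2 0 (-(1 / (Real.sqrt 2 * (n:ℝ)))) : X)‖
          = ‖(-(1 / (Real.sqrt 2 * (n:ℝ))) : ℝ)‖ := by
        simpa using lp.norm_single hp (fun _ : ℕ => (-(1 / (Real.sqrt 2 * (n:ℝ))) : ℝ)) 0
      rw [hns, norm_neg, Real.norm_eq_abs, abs_of_nonneg (by positivity)]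
      exact hnδ
  have := hsub hzmem
  rw [Metric.mem_closedBall, dist_zero_right] at this
  have h2 := hnorm n hn1
  nlinarith [norm_nonneg (z n)]
end

section
/- Let X = ℓ², P = ℓ²₊, and K = {x ∈ ℓ² : x₁ + xₙ² ≤ 0 for all n ≥ 2}. If x ∈ K with ‖x‖ < 1 and x ≠ 0, then x is not P-maximal in K: there exist n₀ ≥ 2 and ε > 0 such that the segment [x − ε e_{n₀}, x + ε e_{n₀}] is contained in K, and hence (x + P) ∩ K ≠ {x}. Therefore Max(K,P) ∩ U_X = {0}, where U_X is the open unit ball. -/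
open scoped Pointwise

/-- In `X = ℓ²` (paper coordinate `n` is Lean index `n - 1`) with `P = ℓ²₊` and
`K = {x : x₁ + xₙ² ≤ 0 for all n ≥ 2}`: every `x ∈ K` with `‖x‖ < 1`, `x ≠ 0`, admits
`n₀ ≥ 2` and `ε > 0` with the segment `[x − ε e_{n₀}, x + ε e_{n₀}] ⊆ K`, hence is not
`P`-maximal; therefore `Max(K, P) ∩ U_X = {0}` (`U_X` the open unit ball). -/
theorem stmt16 :
    let X := lp (fun _ : ℕ => ℝ) 2
    let P : Set X := {x | ∀ i : ℕ, 0 ≤ x i}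
    let K : Set X := {x | ∀ i : ℕ, 1 ≤ i → x 0 + (x i) ^ 2 ≤ 0}
    (∀ x ∈ K, ‖x‖ < 1 → x ≠ 0 →
      (∃ n₀ : ℕ, 1 ≤ n₀ ∧ ∃ ε > (0 : ℝ),
          (∀ t : ℝ, |t| ≤ ε → x + t • (lp.single 2 n₀ (1 : ℝ) : X) ∈ K)) ∧
        K ∩ (({x} : Set X) + P) ≠ {x}) ∧
      {x ∈ K | ‖x‖ < 1 ∧ K ∩ (({x} : Set X) + P) = {x}} = {0} := by
  intro X P K
  have key : ∀ x ∈ K, x ≠ 0 →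
      ∃ n₀ : ℕ, 1 ≤ n₀ ∧ ∃ ε > (0 : ℝ),
        (∀ t : ℝ, |t| ≤ ε → x + t • (lp.single 2 n₀ (1 : ℝ) : X) ∈ K) := by
    intro x hx hx0
    -- x 0 < 0
    have hx0le : x 0 ≤ 0 := le_trans (le_add_of_nonneg_right (sq_nonneg _)) (hx 1 le_rfl)
    have hx0lt : x 0 < 0 := by
      rcases lt_or_eq_of_le hx0le with h | h
      · exact h
      · exfalso; apply hx0
        apply lp.ext
        funext i
        rcases Nat.eq_zero_or_pos i with rfl | hi
        · exact h
        · have := hx i hi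
          rw [h, zero_add] at this
          have : (x i) ^ 2 = 0 := le_antisymm this (sq_nonneg _)
          exact pow_eq_zero_iff two_ne_zero |>.1 this
    set a : ℝ := -x 0 with ha
    have hapos : 0 < a := by simp [ha]; linarith
    -- summability
    have hsum : Summable (fun i => ‖x i‖ ^ (2:ℝ)) := by
      have hm := lp.memℓp x
      have hlt : 0 < (2 : ENNReal).toReal := by norm_num
      rw [memℓp_gen_iff hlt] at hm
      simpa using hm
    have htend := hsum.tendsto_atTop_zero
    have h4 : 0 < a / 4 := by linarith
    obtain ⟨N, hN⟩ := (Metric.tendsto_atTop.1 htend) (a/4) h4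
    set n₀ := N + 1
    have hn₀ : 1 ≤ n₀ := Nat.le_add_left 1 N
    have hsmall : (x n₀) ^ 2 < a / 4 := by
      have := hN n₀ (Nat.le_add_right N 1)
      rw [Real.dist_eq, sub_zero] at this
      rw [Real.norm_eq_abs,
        show (2:ℝ) = ((2:ℕ):ℝ) by norm_num, Real.rpow_natCast, sq_abs] at this
      calc (x n₀)^2 ≤ |(x n₀)^2| := le_abs_self _
        _ < a/4 := this
    refine ⟨n₀, hn₀, Real.sqrt a / 2, by positivity, ?_⟩
    intro t ht
    intro i hi
    have happ : ((x + t • (lp.single 2 n₀ (1 : ℝ) : X)) : ∀ _, ℝ) i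
        = x i + t * (if i = n₀ then (1:ℝ) else 0) := by
      show x i + t * (lp.single 2 n₀ (1:ℝ) : X) i = _
      simp [lp.coeFn_add, lp.coeFn_smul, lp.single_apply, Pi.single_apply]
    have happ0 : ((x + t • (lp.single 2 n₀ (1 : ℝ) : X)) : ∀ _, ℝ) 0 = x 0 := by
      have : (0:ℕ) ≠ n₀ := by omega
      show x 0 + t * (lp.single 2 n₀ (1:ℝ) : X) 0 = _
      simp [lp.coeFn_add, lp.coeFn_smul, lp.single_apply, this]
    show _ + _ ≤ 0
    rw [happ0, happ]
    by_cases hin : i = n₀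
    · subst hin
      rw [if_pos rfl, mul_one]
      have habs : |x n₀| < Real.sqrt a / 2 := by
        rw [← Real.sqrt_sq_eq_abs]
        have : Real.sqrt ((x n₀)^2) < Real.sqrt (a/4) := by
          exact Real.sqrt_lt_sqrt (sq_nonneg _) hsmall
        calc Real.sqrt ((x n₀)^2) < Real.sqrt (a/4) := this
          _ = Real.sqrt a / 2 := by
            rw [show a/4 = a * (1/2)^2 by ring, Real.sqrt_mul hapos.le,
              Real.sqrt_sq (by norm_num : (0:ℝ) ≤ 1/2)]; ring
      have : |x n₀ + t| ≤ Real.sqrt a := by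
        calc |x n₀ + t| ≤ |x n₀| + |t| := abs_add_le _ _
          _ ≤ Real.sqrt a / 2 + Real.sqrt a / 2 := by linarith
          _ = Real.sqrt a := by ring
      have hsq : (x n₀ + t)^2 ≤ a := by
        have := sq_le_sq' (neg_le_of_abs_le this) (le_of_abs_le this)
        calc (x n₀ + t)^2 ≤ (Real.sqrt a)^2 := this
          _ = a := Real.sq_sqrt hapos.le
      linarith
    · simp only [if_neg hin, mul_zero, add_zero]
      exact hx i hi
  constructor
  · intro x hx hxnorm hx0
    obtain ⟨n₀, hn₀, ε, hε, hseg⟩ := key x hx hx0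
    refine ⟨⟨n₀, hn₀, ε, hε, hseg⟩, ?_⟩
    intro hcon
    have hmem : x + ε • (lp.single 2 n₀ (1 : ℝ) : X) ∈ K ∩ (({x} : Set X) + P) := by
      constructor
      · exact hseg ε (by rw [abs_of_pos hε])
      · exact ⟨x, rfl, ε • (lp.single 2 n₀ (1 : ℝ) : X), by
          intro i
          by_cases hin : i = n₀
          · simp [hin, lp.coeFn_smul, lp.single_apply, hε.le]
          · simp [lp.coeFn_smul, lp.single_apply, hin], rfl⟩
    rw [hcon] at hmem
    have : (ε • (lp.single 2 n₀ (1 : ℝ) : X)) = 0 := by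
      have := Set.mem_singleton_iff.1 hmem
      have h := congrArg (· - x) this
      simpa [add_comm, add_sub_cancel_left] using h
    have : ((ε • (lp.single 2 n₀ (1 : ℝ) : X)) : ∀ _, ℝ) n₀ = 0 := by rw [this]; simp
    rw [lp.coeFn_smul] at this
    simp [lp.single_apply_self] at this
    exact absurd this (ne_of_gt hε)
  · ext x
    simp only [Set.mem_setOf_eq, Set.mem_singleton_iff]
    constructor
    · rintro ⟨hxK, hxnorm, hmax⟩
      by_contra hx0
      obtain ⟨n₀, hn₀, ε, hε, hseg⟩ := key x hxK hx0
      have hmem : x + ε • (lp.single 2 n₀ (1 : ℝ) : X) ∈ K ∩ (({x} : Set X) + P) := by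
        constructor
        · exact hseg ε (by rw [abs_of_pos hε])
        · exact ⟨x, rfl, ε • (lp.single 2 n₀ (1 : ℝ) : X), by
            intro i
            by_cases hin : i = n₀
            · simp [hin, lp.coeFn_smul, lp.single_apply, hε.le]
            · simp [lp.coeFn_smul, lp.single_apply, hin], rfl⟩
      rw [hmax] at hmem
      have heq := Set.mem_singleton_iff.1 hmem
      have h2 : (ε • (lp.single 2 n₀ (1 : ℝ) : X)) = 0 := by
        have h := congrArg (· - x) heq
        simpa [add_comm, add_sub_cancel_left] using h
      have : ((ε • (lp.single 2 n₀ (1 : ℝ) : X)) : ∀ _, ℝ) n₀ = 0 := by rw [h2]; simp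
      rw [lp.coeFn_smul] at this
      simp [lp.single_apply_self] at this
      exact absurd this (ne_of_gt hε)
    · rintro rfl
      refine ⟨?_, by simp, ?_⟩
      · intro i hi; simp [lp.coeFn_zero]
      · ext y
        simp only [Set.mem_inter_iff, Set.mem_setOf_eq, Set.mem_singleton_iff]
        constructor
        · rintro ⟨hyK, z, hz, p, hp, rfl⟩
          simp only [Set.mem_singleton_iff] at hz
          subst hz
          have hzp : ∀ i, ((0:X) + p) i = p i := by intro i; simp [lp.coeFn_add]
          have hp0 : p 0 ≤ 0 := by
            have := hyK 1 le_rfl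
            rw [hzp 0] at this
            nlinarith [sq_nonneg (((0:X)+p) 1)]
          have hp0' : p 0 = 0 := le_antisymm hp0 (hp 0)
          have : p = 0 := by
            apply lp.ext; funext i
            rcases Nat.eq_zero_or_pos i with rfl | hi
            · exact hp0'
            · have := hyK i hi
              rw [hzp 0, hzp i, hp0', zero_add] at this
              have h2 : (p i)^2 = 0 := le_antisymm this (sq_nonneg _)
              exact pow_eq_zero_iff two_ne_zero |>.1 h2
          simp [this]
        · rintro rfl
          exact ⟨fun i hi => by simp [lp.coeFn_zero], 0, rfl, 0, fun i => by simp [lp.coeFn_zero], by simp⟩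
end

section
/- Let X be a Banach space, P a closed convex cone, K a weakly compact convex subset of X, and x̄ ∈ K a P-maximal element of K. Suppose P has a bounded base, i.e. there is f ∈ X* and constants 0 < m with f(p) ≥ m‖p‖ for all p ∈ P. Then x̄ is strictly maximal: for every ε > 0 there exists δ > 0 such that (P + δB_X) ∩ (K − x̄) ⊆ εB_X. -/
open scoped Pointwise

/-- If `P` is a closed convex cone with a bounded base (there are `f ∈ X*` and `m > 0`
with `f(p) ≥ m‖p‖` on `P`), `K` is a weakly compact convex subset of the Banach space
`X`, and `x̄ ∈ K` is `P`-maximal, then `x̄` is strictly maximal: for every `ε > 0`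
there is `δ > 0` with `(P + δB_X) ∩ (K − x̄) ⊆ εB_X`. -/
theorem stmt17 (X : Type*) [NormedAddCommGroup X] [NormedSpace ℝ X] [CompleteSpace X]
    (P : Set X) (hPcl : IsClosed P) (hPcv : Convex ℝ P)
    (hPcone : ∀ c : ℝ, 0 ≤ c → ∀ p ∈ P, c • p ∈ P)
    (K : Set X) (hKcv : Convex ℝ K)
    (hKwc : IsCompact (toWeakSpace ℝ X '' K))
    (xbar : X) (hx : xbar ∈ K)
    (hmax : K ∩ (({xbar} : Set X) + P) = {xbar})
    (f : X →L[ℝ] ℝ) (m : ℝ) (hm : 0 < m) (hf : ∀ p ∈ P, m * ‖p‖ ≤ f p) :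
    ∀ ε > (0 : ℝ), ∃ δ > (0 : ℝ),
      (P + Metric.closedBall (0 : X) δ) ∩ ((· - xbar) '' K) ⊆
        Metric.closedBall (0 : X) ε := by
  intro ε hε
  by_contra hcon
  push_neg at hcon
  have hfnn : (0:ℝ) ≤ ‖f‖ := norm_nonneg _
  set η : ℝ := m * ε / 2 with hηdef
  have hηpos : 0 < η := by positivity
  set δ0 : ℝ := m * ε / (2 * (m + ‖f‖)) with hδ0def
  have hδ0pos : 0 < δ0 := by positivity
  have hδ0id : δ0 * (2 * (m + ‖f‖)) = m * ε := by
    rw [hδ0def]; field_simp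
  set δ : ℕ → ℝ := fun n => δ0 / (n + 1) with hδdef
  have hδpos : ∀ n, 0 < δ n := fun n => by positivity
  have hδle : ∀ n, δ n ≤ δ0 := by
    intro n
    rw [hδdef]
    rw [div_le_iff₀ (by positivity)]
    nlinarith [Nat.cast_nonneg (α := ℝ) n]
  have hδanti : ∀ i n : ℕ, i ≤ n → δ n ≤ δ i := by
    intro i n hin
    apply div_le_div_of_nonneg_left hδ0pos.le (by positivity)
    have : (i:ℝ) ≤ n := Nat.cast_le.mpr hin
    linarith
  set S : ℕ → Set X := fun n => {xbar} + P + Metric.closedBall (0:X) (δ n) with hSdef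
  have hScv : ∀ n, Convex ℝ (S n) :=
    fun n => ((convex_singleton _).add hPcv).add (convex_closedBall _ _)
  have hSanti : ∀ i n : ℕ, i ≤ n → S n ⊆ S i := by
    intro i n hin
    exact Set.add_subset_add_left (Metric.closedBall_subset_closedBall (hδanti i n hin))
  have hg : Continuous fun w : WeakSpace ℝ X => f ((toWeakSpace ℝ X).symm w) :=
    WeakBilin.eval_continuous (topDualPairing ℝ X).flip f
  set t : ℕ → Set (WeakSpace ℝ X) := fun n =>
    closure (toWeakSpace ℝ X '' S n) ∩
      {w | f xbar + η ≤ f ((toWeakSpace ℝ X).symm w)} with htdef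
  have htc : ∀ n, IsClosed (t n) :=
    fun n => isClosed_closure.inter (isClosed_le continuous_const hg)
  -- witnesses
  have hwit : ∀ n, ∃ k ∈ K, k ∈ S n ∧ f xbar + η ≤ f k := by
    intro n
    obtain ⟨y, hy1, hy2⟩ := Set.not_subset.mp (hcon (δ n) (hδpos n))
    obtain ⟨hyP, hyK⟩ := hy1
    obtain ⟨k, hkK, hk⟩ := hyK
    obtain ⟨p, hp, b, hb, hpb⟩ := hyP
    have hk' : k - xbar = y := hk
    have hpb' : p + b = y := hpb
    have hynorm : ε < ‖y‖ := by
      simpa [Metric.mem_closedBall, dist_zero_right, not_le] using hy2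
    have hbn : ‖b‖ ≤ δ n := by simpa [Metric.mem_closedBall, dist_zero_right] using hb
    have hpn : ε - δ n ≤ ‖p‖ := by
      have : ‖y‖ ≤ ‖p‖ + ‖b‖ := hpb' ▸ norm_add_le p b
      linarith
    have hfb : -(‖f‖ * δ n) ≤ f b := by
      have h1 : |f b| ≤ ‖f‖ * ‖b‖ := by simpa using f.le_opNorm b
      have h2 : -|f b| ≤ f b := neg_abs_le (f b)
      have h3 : ‖f‖ * ‖b‖ ≤ ‖f‖ * δ n := by nlinarith
      linarith
    have hfp : m * ‖p‖ ≤ f p := hf p hp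
    have hfy : f xbar + η ≤ f k := by
      have hky : f k - f xbar = f y := by rw [← map_sub, hk']
      have hyv : f y = f p + f b := by rw [← hpb', map_add]
      have hδn := hδle n
      have hδnpos := (hδpos n).le
      nlinarith
    refine ⟨k, hkK, ?_, hfy⟩
    have hkeq : xbar + p + b = k := by
      have h1 : k = y + xbar := sub_eq_iff_eq_add.mp hk'
      rw [add_assoc, hpb', h1]; abel
    have hmem : xbar + p + b ∈ S n :=
      Set.add_mem_add (Set.add_mem_add (Set.mem_singleton xbar) hp) hb
    rwa [hkeq] at hmem
  -- compactness: the nested closed sets meet the compact image of K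
  have hfin : ∀ u : Finset ℕ, ((toWeakSpace ℝ X '' K) ∩ ⋂ i ∈ u, t i).Nonempty := by
    intro u
    set N := u.sup id with hN
    obtain ⟨k, hkK, hkS, hkf⟩ := hwit N
    refine ⟨toWeakSpace ℝ X k, ⟨k, hkK, rfl⟩, ?_⟩
    rw [Set.mem_iInter₂]
    intro i hi
    have hiN : i ≤ N := Finset.le_sup (f := id) hi
    constructor
    · exact subset_closure ⟨k, hSanti i N hiN hkS, rfl⟩
    · simpa using hkf
  obtain ⟨w, hwK, hwt⟩ := hKwc.inter_iInter_nonempty t htc hfin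
  obtain ⟨k, hkK, rfl⟩ := hwK
  have hwt' := Set.mem_iInter.mp hwt
  have hclos : ∀ n, k ∈ closure (S n) := by
    intro n
    have h1 := (hwt' n).1
    rw [← (hScv n).toWeakSpace_closure ℝ] at h1
    obtain ⟨k', hk', hkk'⟩ := h1
    rwa [(toWeakSpace ℝ X).injective hkk'] at hk'
  have hkf : f xbar + η ≤ f k := by
    have := (hwt' 0).2
    simpa using this
  have hkP : k - xbar ∈ P := by
    rw [← hPcl.closure_eq, Metric.mem_closure_iff]
    intro r hr
    obtain ⟨n, hn⟩ := exists_nat_gt (2 * δ0 / r)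
    have hnpos : (0:ℝ) < (n:ℝ) + 1 := by positivity
    have h2δ : 2 * δ n < r := by
      rw [div_lt_iff₀ hr] at hn
      show 2 * (δ0 / ((n:ℝ) + 1)) < r
      rw [show (2:ℝ) * (δ0 / ((n:ℝ)+1)) = 2 * δ0 / ((n:ℝ)+1) by ring, div_lt_iff₀ hnpos]
      nlinarith
    obtain ⟨s, hsS, hks⟩ := Metric.mem_closure_iff.mp (hclos n) (δ n) (hδpos n)
    obtain ⟨xp, ⟨x', hx', p, hp, hxp⟩, b, hb, hspb⟩ := hsS
    rw [Set.mem_singleton_iff] at hx'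
    refine ⟨p, hp, ?_⟩
    have hbn : ‖b‖ ≤ δ n := by simpa [Metric.mem_closedBall, dist_zero_right] using hb
    have hxp' : x' + p = xp := hxp
    have hspb' : xp + b = s := hspb
    have hseq : s = xbar + p + b := by rw [← hspb', ← hxp', hx']
    have : k - xbar - p = (k - s) + b := by rw [hseq]; abel
    rw [dist_eq_norm, this]
    calc ‖(k - s) + b‖ ≤ ‖k - s‖ + ‖b‖ := norm_add_le _ _
      _ < δ n + δ n := by
          have : ‖k - s‖ < δ n := by rwa [dist_eq_norm] at hks
          linarith
      _ < r := by linarith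
  have hkx : k = xbar := by
    have : k ∈ K ∩ ({xbar} + P) := by
      refine ⟨hkK, ?_⟩
      refine ⟨xbar, Set.mem_singleton xbar, k - xbar, hkP, ?_⟩
      show xbar + (k - xbar) = k
      abel
    rw [hmax] at this
    exact this
  rw [hkx] at hkf
  linarith
end
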